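/- Let I ⊂ S = K[x_1,...,x_n] be a squarefree strongly stable ideal generated in degree d. For j ≥ 0 let I_{[d+j]} be the ideal generated by all squarefree monomials of degree d+j in I, and let μ_{d+j}(I) be the number of minimal monomial generators of I_{[d+j]}. For i ≥ 0, let m_{d+i}(I) be the number of minimal monomial generators u of I with max support index m(u) = d+i. Then μ_{d+j}(I) = ∑_{i=0}^{n-d} C(n-d-i, j) m_{d+i}(I) for all j ≥ 0. -/

import Mathlib

open Finset

private lemma aux_min (d : ℕ) (G : Finset (Finset ℕ)) (hd : 1 ≤ d)
    (hcard : ∀ g ∈ G, g.card = d)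
    (hstable : ∀ g ∈ G, ∀ i ∈ g, ∀ j, 1 ≤ j → j < i → j ∉ g →
      insert j (g.erase i) ∈ G)
    (T : Finset ℕ) (hT1 : ∀ t ∈ T, 1 ≤ t) :
    ∀ s : ℕ, ∀ g ∈ G, g.sum id = s → g ⊆ T →
      ∃ g' ∈ G, g' ⊆ T ∧ ∀ t ∈ T, t ∉ g' → g'.sup id < t := by
  intro s
  induction s using Nat.strong_induction_on with
  | _ s ih =>
    intro g hg hsum hgT
    by_cases h : ∀ t ∈ T, t ∉ g → g.sup id < t
    · exact ⟨g, hg, hgT, h⟩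
    · push_neg at h
      obtain ⟨t, htT, htg, hle⟩ := h
      have hne : g.Nonempty := by
        rw [← Finset.card_pos, hcard g hg]; omega
      have hM : g.sup id ∈ g := by
        obtain ⟨M, hMm, hmax⟩ := Finset.exists_max_image g id hne
        have hEq : g.sup id = M := le_antisymm (Finset.sup_le hmax) (Finset.le_sup (f := id) hMm)
        rw [hEq]; exact hMm
      have htM : t < g.sup id := lt_of_le_of_ne hle (fun h => htg (h ▸ hM))
      have hg' : insert t (g.erase (g.sup id)) ∈ G :=
        hstable g hg _ hM t (hT1 t htT) htM htg
      have hsub2 : insert t (g.erase (g.sup id)) ⊆ T := by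
        intro x hx
        rcases Finset.mem_insert.mp hx with rfl | hx
        · exact htT
        · exact hgT (Finset.mem_of_mem_erase hx)
      have hsum' : (insert t (g.erase (g.sup id))).sum id < s := by
        rw [Finset.sum_insert (fun h => htg (Finset.mem_of_mem_erase h))]
        have h2 := Finset.sum_erase_add g id hM
        simp only [id_eq] at h2 hsum ⊢
        omega
      exact ih _ hsum' _ hg' rfl hsub2

/-- Lemma on the generators of a squarefree strongly stable ideal, in the combinatorial
model: a squarefree monomial in `x_1, …, x_n` is a subset of `{1, …, n}`; the ideal `I`
generated in degree `d` is given by its minimal generating set `G` consisting of `d`-sets;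
squarefree strong stability is the exchange property on `G`.  The number of minimal
generators `μ_{d+j}(I)` of `I_{[d+j]}` is the number of `(d+j)`-subsets of `[n]` containing
a member of `G`, and `m_{d+i}(I)` is the number of `g ∈ G` with `m(g) = max g = d+i`. -/
theorem stmt11 (n d : ℕ) (hd : 1 ≤ d) (hdn : d ≤ n)
    (G : Finset (Finset ℕ)) (hG : G.Nonempty)
    (hsub : ∀ g ∈ G, g ⊆ Finset.Icc 1 n)
    (hcard : ∀ g ∈ G, g.card = d)
    (hstable : ∀ g ∈ G, ∀ i ∈ g, ∀ j, 1 ≤ j → j < i → j ∉ g →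
      insert j (g.erase i) ∈ G)
    (j : ℕ) :
    ((Finset.Icc 1 n).powerset.filter (fun T => T.card = d + j ∧ ∃ g ∈ G, g ⊆ T)).card
      = ∑ i ∈ Finset.range (n - d + 1),
          (n - d - i).choose j * (G.filter (fun g => g.sup id = d + i)).card := by
  classical
  -- basic facts about sup of members of G
  have hsup_le : ∀ g ∈ G, g.sup id ≤ n := by
    intro g hg
    exact Finset.sup_le fun x hx => (Finset.mem_Icc.mp (hsub g hg hx)).2
  have hd_le_sup : ∀ g ∈ G, d ≤ g.sup id := by
    intro g hg
    have h1 : g ⊆ Finset.Icc 1 (g.sup id) := by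
      intro x hx
      exact Finset.mem_Icc.mpr ⟨(Finset.mem_Icc.mp (hsub g hg hx)).1, Finset.le_sup (f := id) hx⟩
    have := Finset.card_le_card h1
    rw [hcard g hg, Nat.card_Icc] at this
    omega
  -- extraction of g from T = g ∪ S
  have hextract : ∀ g ∈ G, ∀ S ⊆ Finset.Icc (g.sup id + 1) n,
      g = (g ∪ S).filter (fun x => x ≤ g.sup id) := by
    intro g hg S hS
    ext x
    simp only [Finset.mem_filter, Finset.mem_union]
    constructor
    · intro hx
      exact ⟨Or.inl hx, Finset.le_sup (f := id) hx⟩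
    · rintro ⟨hx | hx, hle⟩
      · exact hx
      · have := (Finset.mem_Icc.mp (hS hx)).1; omega
  -- set equality
  have hset : (Finset.Icc 1 n).powerset.filter (fun T => T.card = d + j ∧ ∃ g ∈ G, g ⊆ T)
      = G.biUnion (fun g =>
          (Finset.powersetCard j (Finset.Icc (g.sup id + 1) n)).image (fun S => g ∪ S)) := by
    ext T
    simp only [Finset.mem_filter, Finset.mem_powerset, Finset.mem_biUnion, Finset.mem_image,
      Finset.mem_powersetCard]
    constructor
    · rintro ⟨hTsub, hTcard, g, hg, hgT⟩
      obtain ⟨g', hg', hg'T, hmin⟩ := aux_min d G hd hcard hstable T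
        (fun t ht => (Finset.mem_Icc.mp (hTsub ht)).1) (g.sum id) g hg rfl hgT
      refine ⟨g', hg', T \ g', ⟨?_, ?_⟩, ?_⟩
      · intro x hx
        have hxT := (Finset.mem_sdiff.mp hx).1
        have h1 := hmin x hxT (Finset.mem_sdiff.mp hx).2
        exact Finset.mem_Icc.mpr ⟨h1, (Finset.mem_Icc.mp (hTsub hxT)).2⟩
      · rw [Finset.card_sdiff_of_subset hg'T, hTcard, hcard g' hg']; omega
      · exact Finset.union_sdiff_of_subset hg'T
    · rintro ⟨g, hg, S, ⟨hSsub, hScard⟩, rfl⟩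
      have hdisj : Disjoint g S := by
        rw [Finset.disjoint_left]
        intro x hxg hxS
        have h1 : x ≤ g.sup id := Finset.le_sup (f := id) hxg
        have h2 := (Finset.mem_Icc.mp (hSsub hxS)).1
        omega
      refine ⟨?_, ?_, g, hg, Finset.subset_union_left⟩
      · intro x hx
        rcases Finset.mem_union.mp hx with hx | hx
        · exact hsub g hg hx
        · have := Finset.mem_Icc.mp (hSsub hx)
          exact Finset.mem_Icc.mpr ⟨by omega, this.2⟩
      · rw [Finset.card_union_of_disjoint hdisj, hcard g hg, hScard]
  rw [hset]
  rw [Finset.card_biUnion]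
  swap
  · -- pairwise disjointness
    intro g1 hg1 g2 hg2 hne
    rw [Function.onFun, Finset.disjoint_left]
    rintro T hT1 hT2
    simp only [Finset.mem_image, Finset.mem_powersetCard] at hT1 hT2
    obtain ⟨S1, ⟨hS1, _⟩, hTe1⟩ := hT1
    obtain ⟨S2, ⟨hS2, _⟩, hTe2⟩ := hT2
    have key : ∀ a ∈ G, ∀ b ∈ G, ∀ Sa ⊆ Finset.Icc (a.sup id + 1) n,
        ∀ Sb ⊆ Finset.Icc (b.sup id + 1) n, a ∪ Sa = b ∪ Sb → a.sup id ≤ b.sup id → a = b := by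
      intro a ha b hb Sa hSa Sb hSb heq hle
      have h1 := hextract a ha Sa hSa
      have h2 := hextract b hb Sb hSb
      have hab : a ⊆ b := by
        intro x hx
        rw [h2]
        refine Finset.mem_filter.mpr ⟨?_, ?_⟩
        · rw [← heq]; exact Finset.mem_union_left _ hx
        · exact le_trans (Finset.le_sup (f := id) hx) hle
      exact Finset.eq_of_subset_of_card_le hab (by rw [hcard a ha, hcard b hb])
    rcases le_total (g1.sup id) (g2.sup id) with hle | hle
    · exact hne (key g1 hg1 g2 hg2 S1 hS1 S2 hS2 (hTe1.trans hTe2.symm) hle)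
    · exact hne (key g2 hg2 g1 hg1 S2 hS2 S1 hS1 (hTe2.trans hTe1.symm) hle).symm
  -- compute each image's card
  have himg : ∀ g ∈ G,
      ((Finset.powersetCard j (Finset.Icc (g.sup id + 1) n)).image (fun S => g ∪ S)).card
        = (n - g.sup id).choose j := by
    intro g hg
    rw [Finset.card_image_of_injOn, Finset.card_powersetCard, Nat.card_Icc]
    · congr 1; omega
    · intro S1 hS1 S2 hS2 heq
      simp only [Finset.mem_coe, Finset.mem_powersetCard] at hS1 hS2
      have hd1 : Disjoint g S1 := by
        rw [Finset.disjoint_left]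
        intro x hxg hxS
        have h1 := (Finset.mem_Icc.mp (hS1.1 hxS)).1
        have h2 : x ≤ g.sup id := Finset.le_sup (f := id) hxg
        omega
      have hd2 : Disjoint g S2 := by
        rw [Finset.disjoint_left]
        intro x hxg hxS
        have h1 := (Finset.mem_Icc.mp (hS2.1 hxS)).1
        have h2 : x ≤ g.sup id := Finset.le_sup (f := id) hxg
        omega
      have heq' : g ∪ S1 = g ∪ S2 := heq
      have : (g ∪ S1) \ g = (g ∪ S2) \ g := by rw [heq']
      rwa [Finset.union_sdiff_cancel_left hd1, Finset.union_sdiff_cancel_left hd2] at this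
  rw [Finset.sum_congr rfl himg]
  -- regroup by sup value
  have hmap : ∀ g ∈ G, g.sup id - d ∈ Finset.range (n - d + 1) := fun g hg =>
    Finset.mem_range.mpr (by have := hsup_le g hg; have := hd_le_sup g hg; omega)
  have hfib := Finset.sum_fiberwise_of_maps_to (s := G) (t := Finset.range (n - d + 1))
    (g := fun g => g.sup id - d) hmap (fun g => (n - g.sup id).choose j)
  rw [← hfib]
  refine Finset.sum_congr rfl fun i hi => ?_
  have hfilter : G.filter (fun g => g.sup id - d = i) = G.filter (fun g => g.sup id = d + i) := by
    apply Finset.filter_congr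
    intro g hg
    have := hd_le_sup g hg
    constructor <;> (intro h; omega)
  rw [hfilter]
  rw [Finset.sum_congr rfl (fun g hg => ?_), Finset.sum_const, smul_eq_mul, mul_comm]
  have : g.sup id = d + i := (Finset.mem_filter.mp hg).2
  rw [this]
  congr 1
  omega
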